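/- Let B_i ∈ ℝ^{s×s}, i = 1,...,N, be symmetric matrices with ∑_{i=1}^N B_i positive definite, and let y_i ≥ 0. Define g(z) = ∑_{i=1}^N (zᵀB_i z - y_i)². Then for any z₀, the sublevel set {z : g(z) ≤ g(z₀)} is bounded; in particular ‖z‖² ≤ (√(N g(z₀)) + ∑_i y_i) / λ_min(∑_i B_i) for all z in the sublevel set. -/

import Mathlib

open Finset Matrix

lemma rayleigh_aux {s : ℕ} (hs : 0 < s) {A : Matrix (Fin s) (Fin s) ℝ}
    (hA : A.IsHermitian) (z : Fin s → ℝ) :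
    (⨅ j, hA.eigenvalues j) * (∑ i, z i ^ 2) ≤ z ⬝ᵥ A *ᵥ z := by
  haveI : NeZero s := ⟨hs.ne'⟩
  set c := ⨅ j, hA.eigenvalues j with hc
  have hM : (A - c • 1).PosSemidef := by
    have hV := (Matrix.mem_unitaryGroup_iff).mp (hA.eigenvectorUnitary).2
    have hdiag : (A - c • 1) =
        (hA.eigenvectorUnitary : Matrix (Fin s) (Fin s) ℝ) *
          diagonal (fun j => hA.eigenvalues j - c) *
          (hA.eigenvectorUnitary : Matrix (Fin s) (Fin s) ℝ)ᴴ := by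
      have hD : diagonal (fun j => hA.eigenvalues j - c)
          = diagonal (RCLike.ofReal ∘ hA.eigenvalues) - c • 1 := by
        rw [smul_one_eq_diagonal, ← diagonal_sub]
        rfl
      rw [hD, mul_sub, sub_mul, ← Matrix.star_eq_conjTranspose,
        ← Unitary.conjStarAlgAut_apply (S := ℝ), ← hA.spectral_theorem]
      congr 1
      rw [mul_smul_comm, smul_mul_assoc, mul_one, hV]
    rw [hdiag]
    refine Matrix.PosSemidef.mul_mul_conjTranspose_same ?_ _
    refine Matrix.posSemidef_diagonal_iff.mpr fun j => ?_
    have : c ≤ hA.eigenvalues j := ciInf_le (Finite.bddBelow_range _) j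
    linarith
  have h0 := hM.dotProduct_mulVec_nonneg z
  have hstar : star z = z := rfl
  rw [hstar, sub_mulVec, dotProduct_sub, smul_mulVec, one_mulVec,
    dotProduct_smul] at h0
  have hzz : z ⬝ᵥ z = ∑ i, z i ^ 2 := by
    simp [dotProduct, sq]
  rw [hzz, smul_eq_mul] at h0
  linarith [h0]

/-- Let B_i ∈ ℝ^{s×s} be symmetric with ∑ B_i positive definite and y_i ≥ 0.
For g(z) = ∑_i (zᵀB_i z - y_i)², the sublevel set {z : g(z) ≤ g(z₀)} is bounded;
in particular ‖z‖² ≤ (√(N g(z₀)) + ∑_i y_i) / λ_min(∑_i B_i) on the sublevel set. -/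
theorem stmt6 (N s : ℕ) (hs : 0 < s)
    (B : Fin N → Matrix (Fin s) (Fin s) ℝ) (hB : ∀ i, (B i).IsSymm)
    (y : Fin N → ℝ) (hy : ∀ i, 0 ≤ y i)
    (hPD : (∑ i, B i).PosDef)
    (g : (Fin s → ℝ) → ℝ)
    (hg : ∀ z, g z = ∑ i, (z ⬝ᵥ (B i).mulVec z - y i) ^ 2)
    (z₀ : Fin s → ℝ) :
    Bornology.IsBounded {z : Fin s → ℝ | g z ≤ g z₀} ∧
    ∀ z ∈ {z : Fin s → ℝ | g z ≤ g z₀},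
      haveI : Fact (0 < s) := ⟨hs⟩
      ∑ i, (z i) ^ 2 ≤
        (Real.sqrt ((N : ℝ) * g z₀) + ∑ i, y i) / (⨅ j, hPD.isHermitian.eigenvalues j) := by
  haveI : NeZero s := ⟨hs.ne'⟩
  set c := ⨅ j, hPD.isHermitian.eigenvalues j with hc
  have hcpos : 0 < c := by
    obtain ⟨j, hj⟩ := exists_eq_ciInf_of_finite (f := hPD.isHermitian.eigenvalues)
    rw [hc, ← hj]
    exact hPD.eigenvalues_pos j
  have key : ∀ z ∈ {z : Fin s → ℝ | g z ≤ g z₀},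
      ∑ i, (z i) ^ 2 ≤ (Real.sqrt ((N : ℝ) * g z₀) + ∑ i, y i) / c := by
    intro z hz
    simp only [Set.mem_setOf_eq] at hz
    have hray := rayleigh_aux hs hPD.isHermitian z
    have hsplit : z ⬝ᵥ (∑ i, B i) *ᵥ z = ∑ i, z ⬝ᵥ (B i) *ᵥ z := by
      have hmv : ((∑ i, B i) *ᵥ z) = ∑ i, (B i) *ᵥ z := by
        ext k
        simp only [mulVec, dotProduct, Matrix.sum_apply, Finset.sum_mul, Finset.sum_apply]
        rw [Finset.sum_comm]
      rw [hmv]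
      simp only [dotProduct, Finset.sum_apply, Finset.mul_sum]
      rw [Finset.sum_comm]
    -- bound ∑ z⬝B_i z
    have habs : ∀ i, z ⬝ᵥ (B i) *ᵥ z ≤ |z ⬝ᵥ (B i) *ᵥ z - y i| + y i := by
      intro i
      have := le_abs_self (z ⬝ᵥ (B i) *ᵥ z - y i)
      linarith
    have hCS : ∑ i, |z ⬝ᵥ (B i) *ᵥ z - y i| ≤ Real.sqrt ((N : ℝ) * g z) := by
      have h1 : (∑ i, |z ⬝ᵥ (B i) *ᵥ z - y i|) ^ 2 ≤ (N : ℝ) * g z := by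
        have := sq_sum_le_card_mul_sum_sq
          (s := Finset.univ) (f := fun i => |z ⬝ᵥ (B i) *ᵥ z - y i|)
        simpa [hg z, sq_abs, Finset.card_univ] using this
      have h2 : 0 ≤ ∑ i, |z ⬝ᵥ (B i) *ᵥ z - y i| :=
        Finset.sum_nonneg fun i _ => abs_nonneg _
      calc ∑ i, |z ⬝ᵥ (B i) *ᵥ z - y i|
          = Real.sqrt ((∑ i, |z ⬝ᵥ (B i) *ᵥ z - y i|) ^ 2) := by
            rw [Real.sqrt_sq h2]
        _ ≤ Real.sqrt ((N : ℝ) * g z) := Real.sqrt_le_sqrt h1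
    have hgz : Real.sqrt ((N : ℝ) * g z) ≤ Real.sqrt ((N : ℝ) * g z₀) :=
      Real.sqrt_le_sqrt (by
        have : (0:ℝ) ≤ N := Nat.cast_nonneg N
        nlinarith)
    have hmain : c * ∑ i, (z i) ^ 2 ≤ Real.sqrt ((N : ℝ) * g z₀) + ∑ i, y i := by
      have h3 : ∑ i, z ⬝ᵥ (B i) *ᵥ z ≤ ∑ i, (|z ⬝ᵥ (B i) *ᵥ z - y i| + y i) :=
        Finset.sum_le_sum fun i _ => habs i
      rw [Finset.sum_add_distrib] at h3
      calc c * ∑ i, (z i) ^ 2 ≤ z ⬝ᵥ (∑ i, B i) *ᵥ z := hray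
        _ = ∑ i, z ⬝ᵥ (B i) *ᵥ z := hsplit
        _ ≤ (∑ i, |z ⬝ᵥ (B i) *ᵥ z - y i|) + ∑ i, y i := h3
        _ ≤ Real.sqrt ((N : ℝ) * g z) + ∑ i, y i := by linarith
        _ ≤ Real.sqrt ((N : ℝ) * g z₀) + ∑ i, y i := by linarith
    rw [le_div_iff₀ hcpos]
    linarith [hmain]
  constructor
  · set R := (Real.sqrt ((N : ℝ) * g z₀) + ∑ i, y i) / c with hR
    have hRnonneg : 0 ≤ R := by
      apply div_nonneg _ hcpos.le
      have := Real.sqrt_nonneg ((N : ℝ) * g z₀)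
      have := Finset.sum_nonneg fun i (_ : i ∈ Finset.univ) => hy i
      linarith
    apply Bornology.IsBounded.subset (Metric.isBounded_closedBall
      (x := (0 : Fin s → ℝ)) (r := Real.sqrt R))
    intro z hz
    have hzle := key z hz
    rw [Metric.mem_closedBall, dist_zero_right]
    rw [pi_norm_le_iff_of_nonneg (Real.sqrt_nonneg R)]
    intro i
    rw [Real.norm_eq_abs, ← Real.sqrt_sq_eq_abs]
    apply Real.sqrt_le_sqrt
    calc (z i) ^ 2 ≤ ∑ j, (z j) ^ 2 :=
          Finset.single_le_sum (fun j _ => sq_nonneg (z j)) (Finset.mem_univ i)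
      _ ≤ R := hzle
  · exact key
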